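/- In the diagonal construction on the bi-tree, the set F = { q_{a,k} : a a binary string of length M, 0 ≤ k ≤ 2^s } has capacity comparable to 1: there exist an absolute constant c₀ > 0 and s₀ such that for every integer s ≥ s₀, c₀ ≤ cap(F) ≤ 1. -/

import Mathlib

open Finset

def strings : ℕ → Finset (List Bool)
  | 0 => {([] : List Bool)}
  | N + 1 =>
      {([] : List Bool)} ∪ (strings N).image (List.cons true) ∪ (strings N).image (List.cons false)

/-- Vertices of the bi-tree `T²` of depth `N`: pairs of binary strings of length at most `N`,
ordered by `(α,β) ≤ (α',β')` iff `α' <+: α` and `β' <+: β`. -/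
def biVertices (N : ℕ) : Finset (List Bool × List Bool) := strings N ×ˢ strings N

/-- `𝕀 f (p) = ∑_{p' ≥ p} f p'`. -/
noncomputable def biI (N : ℕ) (f : List Bool × List Bool → ℝ) (p : List Bool × List Bool) : ℝ :=
  ∑ q ∈ (biVertices N).filter (fun q => q.1 <+: p.1 ∧ q.2 <+: p.2), f q

/-- `𝕀* f (p) = ∑_{p' ≤ p} f p'`. -/
noncomputable def biIstar (N : ℕ) (f : List Bool × List Bool → ℝ) (p : List Bool × List Bool) : ℝ :=
  ∑ q ∈ (biVertices N).filter (fun q => p.1 <+: q.1 ∧ p.2 <+: q.2), f q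

/-- The potential `V^μ = 𝕀 (𝕀* μ)` on the bi-tree. -/
noncomputable def biV (N : ℕ) (μ : List Bool × List Bool → ℝ) : List Bool × List Bool → ℝ :=
  biI N (biIstar N μ)

/-- The total mass `|μ|`. -/
noncomputable def biMass (N : ℕ) (μ : List Bool × List Bool → ℝ) : ℝ :=
  ∑ p ∈ biVertices N, μ p

/-- A measure on the boundary `∂T²`: a nonnegative function vanishing off pairs of strings
both of length exactly `N`. -/
def IsBiMeasureOnBoundary (N : ℕ) (μ : List Bool × List Bool → ℝ) : Prop :=
  (∀ p, 0 ≤ μ p) ∧ ∀ p, μ p ≠ 0 → p.1.length = N ∧ p.2.length = N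

/-- The energy `E[ν] = ∑_{α∈T²} (𝕀*ν(α))²`. -/
noncomputable def biEnergy (N : ℕ) (ν : List Bool × List Bool → ℝ) : ℝ :=
  ∑ p ∈ biVertices N, (biIstar N ν p) ^ 2

/-- The partial energy `E_ε[ν] = ∑_{α∈T² : V^ν(α) ≤ ε} (𝕀*ν(α))²`. -/
noncomputable def biPartialEnergy (N : ℕ) (ν : List Bool × List Bool → ℝ) (ε : ℝ) : ℝ :=
  ∑ p ∈ (biVertices N).filter (fun p => biV N ν p ≤ ε), (biIstar N ν p) ^ 2

/-- `cap(E) = inf { ∑ f² : f ≥ 0, 𝕀f ≥ 1 on E }` on the bi-tree of depth `N`. -/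
noncomputable def biCap (N : ℕ) (E : Set (List Bool × List Bool)) : ℝ :=
  sInf { t : ℝ | ∃ f : List Bool × List Bool → ℝ, (∀ p, 0 ≤ f p) ∧
    (∀ p ∈ E, 1 ≤ biI N f p) ∧ t = ∑ p ∈ biVertices N, (f p) ^ 2 }

/-- Superadditivity in each variable on the bi-tree of depth `N`. -/
def BiSuperadditive (N : ℕ) (g : List Bool × List Bool → ℝ) : Prop :=
  (∀ α β : List Bool, α.length < N → β.length ≤ N →
    g (α ++ [false], β) + g (α ++ [true], β) ≤ g (α, β)) ∧
  (∀ α β : List Bool, α.length ≤ N → β.length < N →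
    g (α, β ++ [false]) + g (α, β ++ [true]) ≤ g (α, β))

/-- The rectangle `q_{a,k} = (a 0^{n/2^k}, a 0^{2^k})`, where `n = 2^(2^s)`. -/
def diagQ (s : ℕ) (a : List Bool) (k : ℕ) : List Bool × List Bool :=
  (a ++ List.replicate (2 ^ 2 ^ s / 2 ^ k) false, a ++ List.replicate (2 ^ k) false)

/-- The set `F = { q_{a,k} : a.length = M, 0 ≤ k ≤ 2^s }`, where `M = 2^s − s`. -/
def diagF (s : ℕ) : Set (List Bool × List Bool) :=
  { p | ∃ a : List Bool, ∃ k : ℕ, a.length = 2 ^ s - s ∧ k ≤ 2 ^ s ∧ p = diagQ s a k }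


lemma mem_strings : ∀ {N : ℕ} {l : List Bool}, l ∈ strings N ↔ l.length ≤ N := by
  intro N
  induction N with
  | zero => intro l; simp [strings, List.length_eq_zero_iff]
  | succ N ih =>
    intro l
    constructor
    · intro h
      simp only [strings, mem_union, mem_image, mem_singleton] at h
      rcases h with (rfl | ⟨t, ht, rfl⟩) | ⟨t, ht, rfl⟩
      · simp
      · simp [Nat.succ_le_succ (ih.mp ht)]
      · simp [Nat.succ_le_succ (ih.mp ht)]
    · intro h
      rcases l with _ | ⟨b, t⟩
      · simp [strings]
      · have ht : t ∈ strings N := ih.mpr (by simpa using h)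
        cases b <;> simp only [strings, mem_union, mem_image, mem_singleton]
        · exact Or.inr ⟨t, ht, rfl⟩
        · exact Or.inl (Or.inr ⟨t, ht, rfl⟩)

def lenS (L : ℕ) : Finset (List Bool) := (strings L).filter (fun l => l.length = L)

lemma mem_lenS {L : ℕ} {l : List Bool} : l ∈ lenS L ↔ l.length = L := by
  simp only [lenS, mem_filter, mem_strings]
  exact ⟨fun h => h.2, fun h => ⟨le_of_eq h, h⟩⟩

lemma card_lenS : ∀ L : ℕ, (lenS L).card = 2 ^ L := by
  intro L
  induction L with
  | zero =>
    have : lenS 0 = {([] : List Bool)} := by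
      ext l; simp [mem_lenS, List.length_eq_zero_iff]
    simp [this]
  | succ L ih =>
    have hsp : lenS (L+1) = (lenS L).image (List.cons true) ∪ (lenS L).image (List.cons false) := by
      ext l
      simp only [mem_lenS, mem_union, mem_image]
      constructor
      · intro h
        rcases l with _ | ⟨b, t⟩
        · simp at h
        · cases b
          · right; exact ⟨t, (by simpa using h), rfl⟩
          · left; exact ⟨t, (by simpa using h), rfl⟩
      · rintro (⟨t, ht, rfl⟩ | ⟨t, ht, rfl⟩) <;> simp [ht]
    have hdisj : Disjoint ((lenS L).image (List.cons true)) ((lenS L).image (List.cons false)) := by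
      rw [Finset.disjoint_left]
      intro a ha hb
      obtain ⟨t, _, rfl⟩ := Finset.mem_image.mp ha
      obtain ⟨t', _, h⟩ := Finset.mem_image.mp hb
      simp at h
    rw [hsp, Finset.card_union_of_disjoint hdisj,
      Finset.card_image_of_injective _ List.cons_injective,
      Finset.card_image_of_injective _ List.cons_injective, ih]
    ring
lemma prefix_eq_of_len {α β x : List Bool} (hα : α <+: x) (hβ : β <+: x)
    (h : α.length = β.length) : α = β := by
  rw [List.prefix_iff_eq_take] at hα hβ
  rw [hα, hβ, h]

/-- number of common predecessors, first coordinate version -/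
lemma prefix_count_le (N : ℕ) (x y : List Bool) :
    (((strings N).filter (fun α => α <+: x ∧ α <+: y)).card : ℝ) ≤ min x.length y.length + 1 := by
  have h : ((strings N).filter (fun α => α <+: x ∧ α <+: y)).card ≤ min x.length y.length + 1 := by
    have := Finset.card_le_card_of_injOn (f := List.length)
      (s := (strings N).filter (fun α => α <+: x ∧ α <+: y))
      (t := range (min x.length y.length + 1)) ?_ ?_
    · simpa using this
    · intro α hα
      simp only [Finset.mem_coe, mem_filter] at hα
      simp only [Finset.mem_coe, mem_range, Nat.lt_succ_iff, le_min_iff]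
      exact ⟨hα.2.1.length_le, hα.2.2.length_le⟩
    · intro α hα β hβ h
      simp only [coe_filter, Set.mem_setOf_eq] at hα hβ
      exact prefix_eq_of_len hα.2.1 hβ.2.1 h
  calc (((strings N).filter (fun α => α <+: x ∧ α <+: y)).card : ℝ)
      ≤ ((min x.length y.length + 1 : ℕ) : ℝ) := by exact_mod_cast h
    _ = min x.length y.length + 1 := by push_cast; ring

lemma take_append_of_le {a u : List Bool} {i : ℕ} (h : i ≤ a.length) :
    (a ++ u).take i = a.take i := by
  rw [List.take_append, Nat.sub_eq_zero_of_le h, List.take_zero, List.append_nil]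

lemma prefix_count_ne {N M : ℕ} {a b u v : List Bool} (ha : a.length = M) (hb : b.length = M)
    (hab : a ≠ b) :
    (((strings N).filter (fun α => α <+: a ++ u ∧ α <+: b ++ v)).card : ℝ) ≤
      (((range (M+1)).filter (fun i => a.take i = b.take i)).card : ℝ) := by
  have h : ((strings N).filter (fun α => α <+: a ++ u ∧ α <+: b ++ v)).card ≤
      ((range (M+1)).filter (fun i => a.take i = b.take i)).card := by
    apply Finset.card_le_card_of_injOn (f := List.length)
    · intro α hα
      simp only [Finset.mem_coe, mem_filter] at hα
      obtain ⟨-, h1, h2⟩ := hα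
      have e1 : α = (a ++ u).take α.length := List.prefix_iff_eq_take.mp h1
      have e2 : α = (b ++ v).take α.length := List.prefix_iff_eq_take.mp h2
      have hle : α.length ≤ M := by
        by_contra hc
        push_neg at hc
        have t1 : α.take M = a := by
          rw [e1, List.take_take, min_eq_left hc.le, ← ha, List.take_left]
        have t2 : α.take M = b := by
          rw [e2, List.take_take, min_eq_left hc.le, ← hb, List.take_left]
        exact hab (t1 ▸ t2)
      simp only [Finset.mem_coe, mem_filter, mem_range, Nat.lt_succ_iff]
      refine ⟨hle, ?_⟩
      have hla : α.length ≤ a.length := le_of_le_of_eq hle ha.symm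
      have hlb : α.length ≤ b.length := le_of_le_of_eq hle hb.symm
      calc a.take α.length = (a ++ u).take α.length := (take_append_of_le hla).symm
        _ = α := e1.symm
        _ = (b ++ v).take α.length := e2
        _ = b.take α.length := take_append_of_le hlb
    · intro α hα β hβ h
      simp only [coe_filter, Set.mem_setOf_eq] at hα hβ
      exact prefix_eq_of_len hα.2.1 hβ.2.1 h
  exact_mod_cast h

lemma downward_eq_range {S : Finset ℕ} (h : ∀ j ∈ S, ∀ i ≤ j, i ∈ S) : S = range S.card := by
  have key : ∀ j, j ∈ S ↔ j < S.card := by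
    intro j
    constructor
    · intro hj
      have hsub : range (j+1) ⊆ S := by
        intro i hi
        exact h j hj i (Nat.lt_succ_iff.mp (mem_range.mp hi))
      have := Finset.card_le_card hsub
      simpa using this
    · intro hj
      by_contra hjS
      have hsub : S ⊆ range j := by
        intro k hk
        rw [mem_range]
        rcases lt_or_ge k j with h' | h'
        · exact h'
        · exact absurd (h k hk j h') hjS
      have := Finset.card_le_card hsub
      simp at this
      omega
  ext j; simp [key]

lemma sum_odd_sq (c : ℕ) : ∑ j ∈ range c, (2*(j:ℝ)+1) = (c:ℝ)^2 := by
  induction c with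
  | zero => simp
  | succ c ih => rw [Finset.sum_range_succ, ih]; push_cast; ring

lemma take_agree_downward {a b : List Bool} {i j : ℕ} (hij : i ≤ j)
    (h : a.take j = b.take j) : a.take i = b.take i := by
  calc a.take i = (a.take j).take i := by rw [List.take_take, min_eq_left hij]
    _ = (b.take j).take i := by rw [h]
    _ = b.take i := by rw [List.take_take, min_eq_left hij]

lemma dd_sq_le (a b : List Bool) (M : ℕ) :
    ((((range (M+1)).filter (fun i => a.take i = b.take i)).card : ℝ))^2
      ≤ ∑ j ∈ range (M+1), (2*(j:ℝ)+1) * (if a.take j = b.take j then 1 else 0) := by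
  set S := (range (M+1)).filter (fun i => a.take i = b.take i) with hS
  have hdc : ∀ j ∈ S, ∀ i ≤ j, i ∈ S := by
    intro j hj i hij
    simp only [hS, mem_filter, mem_range] at hj ⊢
    exact ⟨by omega, take_agree_downward hij hj.2⟩
  have hSr : S = range S.card := downward_eq_range hdc
  have hsum : ((S.card : ℝ))^2 = ∑ j ∈ S, (2*(j:ℝ)+1) := by
    rw [hSr]
    simp only [Finset.card_range]
    exact (sum_odd_sq _).symm
  rw [hsum]
  have : ∑ j ∈ S, (2*(j:ℝ)+1) = ∑ j ∈ range (M+1),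
      (if a.take j = b.take j then (2*(j:ℝ)+1) else 0) := by
    rw [Finset.sum_filter]
  rw [this]
  apply Finset.sum_le_sum
  intro j hj
  split_ifs <;> simp <;> positivity
lemma count_take_eq {M j : ℕ} (hj : j ≤ M) (a : List Bool) (haj : j ≤ a.length) :
    ((lenS M).filter (fun b => a.take j = b.take j)).card = 2 ^ (M - j) := by
  rw [← card_lenS (M - j)]
  apply Finset.card_bij' (i := fun b _ => b.drop j) (j := fun t _ => a.take j ++ t)
  · intro b hb
    simp only [mem_filter] at hb
    rw [mem_lenS, List.length_drop, mem_lenS.mp hb.1]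
  · intro t ht
    have hlen : (a.take j).length = j := by
      rw [List.length_take]; omega
    simp only [mem_filter]
    constructor
    · rw [mem_lenS, List.length_append, hlen, mem_lenS.mp ht]; omega
    · rw [List.take_append, hlen, Nat.sub_self, List.take_zero,
        List.append_nil, List.take_take, min_self]
  · intro b hb
    simp only [mem_filter] at hb
    rw [hb.2, List.take_append_drop]
  · intro t ht
    have hlen : (a.take j).length = j := by
      rw [List.length_take]; omega
    exact List.drop_left' hlen

lemma sum_half_le (m : ℕ) : ∑ j ∈ range m, ((1:ℝ)/2)^j ≤ 2 := by
  have h : ∑ j ∈ range m, ((1:ℝ)/2)^j = 2 - 2*(1/2)^m := by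
    induction m with
    | zero => simp
    | succ m ih => rw [Finset.sum_range_succ, ih]; ring
  rw [h]
  have : (0:ℝ) ≤ 2*(1/2)^m := by positivity
  linarith

lemma sum_odd_half_le (m : ℕ) : ∑ j ∈ range m, (2*(j:ℝ)+1) * (1/2)^j ≤ 6 := by
  have h : ∑ j ∈ range m, (2*(j:ℝ)+1) * (1/2)^j = 6 - (4*(m:ℝ)+6)*(1/2)^m := by
    induction m with
    | zero => simp
    | succ m ih => rw [Finset.sum_range_succ, ih]; push_cast; ring
  rw [h]
  have : (0:ℝ) ≤ (4*(m:ℝ)+6)*(1/2)^m := by positivity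
  linarith

lemma cast_pow_sub_real {c j : ℕ} (h : j ≤ c) : ((2:ℝ))^(c-j) = 2^c * (1/2)^j := by
  have : (2:ℝ)^(c-j) * 2^j = 2^c := by
    rw [← pow_add]; congr 1; omega
  have h2 : ((1:ℝ)/2)^j = ((2:ℝ)^j)⁻¹ := by
    rw [one_div, inv_pow]
  rw [h2]
  field_simp
  linarith [this]

-- √2 facts
lemma sqrt2_facts : (1:ℝ) < Real.sqrt 2 ∧ Real.sqrt 2 ≤ 17/12 := by
  have h2 : Real.sqrt 2 ^ 2 = 2 := Real.sq_sqrt (by norm_num)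
  have h0 : (0:ℝ) ≤ Real.sqrt 2 := Real.sqrt_nonneg 2
  constructor
  · nlinarith
  · nlinarith [sq_nonneg (Real.sqrt 2 - 17/12)]

/-- geometric sum of √2 squared -/
lemma sum_sqrt2_sq_le (m : ℕ) : (∑ k ∈ range m, (Real.sqrt 2)^k)^2 ≤ 6 * 2^m := by
  set r := Real.sqrt 2 with hr
  obtain ⟨hr1, hru⟩ := sqrt2_facts
  have h2 : r^2 = 2 := Real.sq_sqrt (by norm_num)
  have hrne : r ≠ 1 := ne_of_gt hr1
  have hG : (∑ k ∈ range m, r^k) * (r - 1) = r^m - 1 := by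
    rw [geom_sum_eq hrne, div_mul_cancel₀ _ (sub_ne_zero.mpr hrne)]
  have hGnn : 0 ≤ ∑ k ∈ range m, r^k := by
    apply Finset.sum_nonneg; intro k _; positivity
  set G := ∑ k ∈ range m, r^k with hGdef
  have key : (G*(r-1))^2 ≤ (r^m)^2 := by
    rw [hG]
    have h1 : (0:ℝ) ≤ r^m - 1 := by
      have : (1:ℝ) ≤ r^m := one_le_pow₀ hr1.le
      linarith
    nlinarith [pow_nonneg (le_of_lt (lt_trans zero_lt_one hr1)) m]
  have hpow : (r^m)^2 = 2^m := by
    rw [← pow_mul, mul_comm m 2, pow_mul, h2]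
  have hden : (1:ℝ)/6 ≤ (r-1)^2 := by nlinarith
  nlinarith [sq_nonneg G, key, hpow, hden, mul_le_mul_of_nonneg_left hden (sq_nonneg G)]

/-- geometric sum of 1/√2 squared -/
lemma sum_invsqrt2_sq_le (m : ℕ) : (∑ k ∈ range m, ((Real.sqrt 2)⁻¹)^k)^2 ≤ 12 := by
  set r := Real.sqrt 2 with hr
  obtain ⟨hr1, hru⟩ := sqrt2_facts
  have h2 : r^2 = 2 := Real.sq_sqrt (by norm_num)
  have hrpos : 0 < r := lt_trans zero_lt_one hr1
  have hxlt : r⁻¹ < 1 := by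
    rw [inv_lt_one_iff₀]; right; exact hr1
  have hxpos : 0 < r⁻¹ := by positivity
  have hxne : r⁻¹ ≠ 1 := ne_of_lt hxlt
  set H := ∑ k ∈ range m, (r⁻¹)^k with hHdef
  have hH' : H * (r⁻¹ - 1) = (r⁻¹)^m - 1 := by
    rw [hHdef, geom_sum_eq hxne, div_mul_cancel₀ _ (sub_ne_zero.mpr hxne)]
  have hH : H * (1 - r⁻¹) = 1 - (r⁻¹)^m := by
    have e : H * (1 - r⁻¹) = -(H * (r⁻¹ - 1)) := by ring
    rw [e, hH']; ring
  have hHnn : 0 ≤ H := by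
    apply Finset.sum_nonneg; intro k _; positivity
  have key : (H*(1-r⁻¹))^2 ≤ 1 := by
    rw [hH]
    have h1 : 0 ≤ (r⁻¹)^m := by positivity
    have h1' : (r⁻¹)^m ≤ 1 := pow_le_one₀ hxpos.le hxlt.le
    nlinarith
  have hden : (1:ℝ)/12 ≤ (1-r⁻¹)^2 := by
    have hrne0 : r ≠ 0 := ne_of_gt hrpos
    have e1 : (1-r⁻¹)*r = r - 1 := by field_simp
    have e2 : (1-r⁻¹)^2 * 2 = (r-1)^2 := by
      calc (1-r⁻¹)^2 * 2 = (1-r⁻¹)^2 * r^2 := by rw [h2]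
        _ = ((1-r⁻¹)*r)^2 := by ring
        _ = (r-1)^2 := by rw [e1]
    nlinarith [e2, hru]
  nlinarith [sq_nonneg H, mul_le_mul_of_nonneg_left hden (sq_nonneg H)]

lemma three_s_le (s : ℕ) (hs : 4 ≤ s) : 3*s + 4 ≤ 2^s := by
  induction s with
  | zero => omega
  | succ s ih =>
    rcases Nat.lt_or_ge s 4 with h | h
    · have h3 : s = 3 ∨ s = 2 ∨ s = 1 ∨ s = 0 := by omega
      rcases h3 with rfl | rfl | rfl | rfl <;> simp_all <;> norm_num
    · have := ih (by omega)
      have : 2^s ≥ 16 := by calc 2^s ≥ 2^4 := Nat.pow_le_pow_right (by norm_num) h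
                                _ = 16 := by norm_num
      rw [pow_succ]
      omega
lemma sum_min_le (K : ℕ) :
    ∑ k ∈ range (K+1), ∑ l ∈ range (K+1), (2:ℝ)^(min k l) ≤ 12 * 2^K := by
  set r := Real.sqrt 2 with hr
  obtain ⟨hr1, -⟩ := sqrt2_facts
  have h2 : r^2 = 2 := Real.sq_sqrt (by norm_num)
  have hstep : ∀ k l : ℕ, (2:ℝ)^(min k l) ≤ r^k * r^l := by
    intro k l
    have e : (2:ℝ)^(min k l) = r^(2 * min k l) := by
      rw [pow_mul, h2]
    rw [e, ← pow_add]
    exact pow_le_pow_right₀ hr1.le (by omega)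
  calc ∑ k ∈ range (K+1), ∑ l ∈ range (K+1), (2:ℝ)^(min k l)
      ≤ ∑ k ∈ range (K+1), ∑ l ∈ range (K+1), r^k * r^l := by
        apply Finset.sum_le_sum; intro k _; apply Finset.sum_le_sum; intro l _
        exact hstep k l
    _ = (∑ k ∈ range (K+1), r^k)^2 := by
        rw [sq, Finset.sum_mul_sum]
    _ ≤ 6 * 2^(K+1) := sum_sqrt2_sq_le (K+1)
    _ = 12 * 2^K := by ring

lemma sum_maxK_le (K : ℕ) :
    ∑ k ∈ range (K+1), ∑ l ∈ range (K+1), (2:ℝ)^(K - max k l) ≤ 12 * 2^K := by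
  set r := Real.sqrt 2 with hr
  obtain ⟨hr1, -⟩ := sqrt2_facts
  have h2 : r^2 = 2 := Real.sq_sqrt (by norm_num)
  have hrpos : (0:ℝ) < r := lt_trans zero_lt_one hr1
  have hstep : ∀ k l, k ≤ K → l ≤ K → (2:ℝ)^(K - max k l) ≤ 2^K * (r⁻¹^k * r⁻¹^l) := by
    intro k l hk hl
    have hmul : (2:ℝ)^(K - max k l) * r^(k+l) ≤ 2^K := by
      have h1 : r^(k+l) ≤ (2:ℝ)^(max k l) := by
        have : r^(k+l) ≤ r^(2 * max k l) := pow_le_pow_right₀ hr1.le (by omega)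
        rwa [pow_mul, h2] at this
      calc (2:ℝ)^(K - max k l) * r^(k+l) ≤ (2:ℝ)^(K - max k l) * 2^(max k l) := by
            apply mul_le_mul_of_nonneg_left h1; positivity
        _ = 2^K := by rw [← pow_add]; congr 1; omega
    have hrkl : (0:ℝ) < r^(k+l) := by positivity
    have e : (2:ℝ)^K * (r⁻¹^k * r⁻¹^l) = 2^K / r^(k+l) := by
      rw [inv_pow, inv_pow, ← mul_inv, ← pow_add]
      ring
    rw [e, le_div_iff₀ hrkl]
    exact hmul
  calc ∑ k ∈ range (K+1), ∑ l ∈ range (K+1), (2:ℝ)^(K - max k l)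
      ≤ ∑ k ∈ range (K+1), ∑ l ∈ range (K+1), 2^K * (r⁻¹^k * r⁻¹^l) := by
        apply Finset.sum_le_sum; intro k hk; apply Finset.sum_le_sum; intro l hl
        exact hstep k l (by simpa [Nat.lt_succ_iff] using hk) (by simpa [Nat.lt_succ_iff] using hl)
    _ = 2^K * (∑ k ∈ range (K+1), r⁻¹^k)^2 := by
        rw [sq, Finset.sum_mul_sum, Finset.mul_sum]
        apply Finset.sum_congr rfl; intro k _
        rw [Finset.mul_sum]
    _ ≤ 2^K * 12 := by
        apply mul_le_mul_of_nonneg_left (sum_invsqrt2_sq_le (K+1)); positivity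
    _ = 12 * 2^K := by ring

lemma sum_cross_le (K : ℕ) :
    ∑ k ∈ range (K+1), ∑ l ∈ range (K+1), (2:ℝ)^(K - max k l) * 2^(min k l)
      ≤ 4 * (K+1) * 2^K := by
  have hpt : ∀ k l, k ≤ K → l ≤ K →
      (2:ℝ)^(K - max k l) * 2^(min k l) = 2^K * (1/2)^(max k l - min k l) := by
    intro k l hk hl
    rw [← pow_add]
    have e : K - max k l + min k l = K - (max k l - min k l) := by omega
    rw [e, cast_pow_sub_real (by omega)]
  have hinner : ∀ k, k ≤ K →
      ∑ l ∈ range (K+1), ((1:ℝ)/2)^(max k l - min k l) ≤ 4 := by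
    intro k hk
    have hsplit : ∑ l ∈ range (K+1), ((1:ℝ)/2)^(max k l - min k l) =
        (∑ l ∈ range (k+1), ((1:ℝ)/2)^(max k l - min k l)) +
        (∑ l ∈ Ico (k+1) (K+1), ((1:ℝ)/2)^(max k l - min k l)) := by
      rw [Finset.range_eq_Ico, ← Finset.sum_Ico_consecutive _ (Nat.zero_le (k+1))
        (by omega : k+1 ≤ K+1), ← Finset.range_eq_Ico]
    rw [hsplit]
    have p1 : ∑ l ∈ range (k+1), ((1:ℝ)/2)^(max k l - min k l) ≤ 2 := by
      have e1 : ∀ l ∈ range (k+1), ((1:ℝ)/2)^(max k l - min k l) = ((1:ℝ)/2)^(k - l) := by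
        intro l hl
        have hlk : l ≤ k := Nat.lt_succ_iff.mp (mem_range.mp hl)
        rw [max_eq_left hlk, min_eq_right hlk]
      rw [Finset.sum_congr rfl e1]
      have := Finset.sum_range_reflect (fun j => ((1:ℝ)/2)^j) (k+1)
      simp only [Nat.add_sub_cancel] at this
      calc ∑ l ∈ range (k+1), ((1:ℝ)/2)^(k - l)
          = ∑ l ∈ range (k+1), ((1:ℝ)/2)^l := this
        _ ≤ 2 := sum_half_le (k+1)
    have p2 : ∑ l ∈ Ico (k+1) (K+1), ((1:ℝ)/2)^(max k l - min k l) ≤ 2 := by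
      have e2 : ∀ l ∈ Ico (k+1) (K+1), ((1:ℝ)/2)^(max k l - min k l) = ((1:ℝ)/2)^(l - k) := by
        intro l hl
        have hkl : k ≤ l := by have := (Finset.mem_Ico.mp hl).1; omega
        rw [max_eq_right hkl, min_eq_left hkl]
      rw [Finset.sum_congr rfl e2, Finset.sum_Ico_eq_sum_range]
      calc ∑ i ∈ range (K+1-(k+1)), ((1:ℝ)/2)^(k+1+i-k)
          ≤ ∑ i ∈ range (K+1-(k+1)), ((1:ℝ)/2)^i := by
            apply Finset.sum_le_sum; intro i _
            apply pow_le_pow_of_le_one (by norm_num) (by norm_num)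
            omega
        _ ≤ 2 := sum_half_le _
    linarith
  calc ∑ k ∈ range (K+1), ∑ l ∈ range (K+1), (2:ℝ)^(K - max k l) * 2^(min k l)
      = ∑ k ∈ range (K+1), ∑ l ∈ range (K+1), (2:ℝ)^K * (1/2)^(max k l - min k l) := by
        apply Finset.sum_congr rfl; intro k hk
        apply Finset.sum_congr rfl; intro l hl
        exact hpt k l (by simpa [Nat.lt_succ_iff] using hk) (by simpa [Nat.lt_succ_iff] using hl)
    _ = ∑ k ∈ range (K+1), (2:ℝ)^K * ∑ l ∈ range (K+1), (1/2)^(max k l - min k l) := by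
        apply Finset.sum_congr rfl; intro k _
        rw [Finset.mul_sum]
    _ ≤ ∑ k ∈ range (K+1), (2:ℝ)^K * 4 := by
        apply Finset.sum_le_sum; intro k hk
        apply mul_le_mul_of_nonneg_left (hinner k (by simpa [Nat.lt_succ_iff] using hk))
        positivity
    _ = 4 * (K+1) * 2^K := by
        rw [Finset.sum_const, Finset.card_range]
        push_cast
        ring
lemma sum_dd_sq (M : ℕ) :
    ∑ a ∈ lenS M, ∑ b ∈ lenS M,
        (((range (M+1)).filter (fun i => a.take i = b.take i)).card : ℝ)^2
      ≤ 6 * 2^(2*M) := by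
  have hper : ∀ a ∈ lenS M, ∑ b ∈ lenS M,
      (((range (M+1)).filter (fun i => a.take i = b.take i)).card : ℝ)^2 ≤ 6 * 2^M := by
    intro a ha
    calc ∑ b ∈ lenS M, (((range (M+1)).filter (fun i => a.take i = b.take i)).card : ℝ)^2
        ≤ ∑ b ∈ lenS M, ∑ j ∈ range (M+1),
            (2*(j:ℝ)+1) * (if a.take j = b.take j then 1 else 0) := by
          apply Finset.sum_le_sum; intro b _; exact dd_sq_le a b M
      _ = ∑ j ∈ range (M+1), ∑ b ∈ lenS M,
            (2*(j:ℝ)+1) * (if a.take j = b.take j then 1 else 0) := Finset.sum_comm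
      _ = ∑ j ∈ range (M+1), (2*(j:ℝ)+1) * 2^M * (1/2)^j := by
          apply Finset.sum_congr rfl; intro j hj
          have hjM : j ≤ M := Nat.lt_succ_iff.mp (mem_range.mp hj)
          have : ∑ b ∈ lenS M, (2*(j:ℝ)+1) * (if a.take j = b.take j then 1 else 0)
              = (2*(j:ℝ)+1) * ∑ b ∈ lenS M, (if a.take j = b.take j then (1:ℝ) else 0) := by
            rw [Finset.mul_sum]
          rw [this, Finset.sum_boole, count_take_eq hjM a (by rw [mem_lenS.mp ha]; exact hjM)]
          push_cast [cast_pow_sub_real hjM]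
          ring
      _ = 2^M * ∑ j ∈ range (M+1), (2*(j:ℝ)+1) * (1/2)^j := by
          rw [Finset.mul_sum]
          apply Finset.sum_congr rfl; intro j _; ring
      _ ≤ 2^M * 6 := by
          apply mul_le_mul_of_nonneg_left (sum_odd_half_le (M+1)); positivity
      _ = 6 * 2^M := by ring
  calc ∑ a ∈ lenS M, ∑ b ∈ lenS M,
        (((range (M+1)).filter (fun i => a.take i = b.take i)).card : ℝ)^2
      ≤ ∑ _a ∈ lenS M, (6:ℝ) * 2^M := Finset.sum_le_sum hper
    _ = (2^M : ℝ) * (6 * 2^M) := by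
        rw [Finset.sum_const, card_lenS]; push_cast; ring
    _ = 6 * 2^(2*M) := by rw [two_mul, pow_add]; ring

lemma pair_bound {s : ℕ} (a b : List Bool) {k l : ℕ}
    (ha : a.length = 2^s - s) (hb : b.length = 2^s - s) (hk : k ≤ 2^s) (hl : l ≤ 2^s) :
    (((strings (2^2^s + (2^s - s))).filter
        (fun α => α <+: (diagQ s a k).1 ∧ α <+: (diagQ s b l).1)).card : ℝ) *
    (((strings (2^2^s + (2^s - s))).filter
        (fun α => α <+: (diagQ s a k).2 ∧ α <+: (diagQ s b l).2)).card : ℝ) ≤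
    (if a = b then (((2^s - s : ℕ) : ℝ) + 2^(2^s - max k l) + 1) *
        (((2^s - s : ℕ) : ℝ) + 2^(min k l) + 1) else 0) +
    (((range ((2^s - s)+1)).filter (fun i => a.take i = b.take i)).card : ℝ)^2 := by
  set M := 2^s - s with hM
  set K := 2^s with hK
  set N := 2^K + M with hN
  have hdiv : ∀ m, m ≤ K → 2^K / 2^m = 2^(K - m) := fun m hm => Nat.pow_div hm two_pos
  have hlen1 : ∀ (c : List Bool) (m : ℕ), c.length = M → m ≤ K →
      (diagQ s c m).1.length = M + 2^(K - m) := by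
    intro c m hc hm
    simp only [diagQ, List.length_append, List.length_replicate, hc, hdiv m hm]
    rw [← hK, hdiv m hm]
  have hlen2 : ∀ (c : List Bool) (m : ℕ), c.length = M → (diagQ s c m).2.length = M + 2^m := by
    intro c m hc
    simp only [diagQ, List.length_append, List.length_replicate, hc]
  by_cases hab : a = b
  · subst hab
    rw [if_pos rfl]
    have c1 : (((strings N).filter
        (fun α => α <+: (diagQ s a k).1 ∧ α <+: (diagQ s a l).1)).card : ℝ) ≤
        (M:ℝ) + 2^(K - max k l) + 1 := by
      refine le_trans (prefix_count_le N _ _) ?_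
      rw [hlen1 a k ha hk, hlen1 a l ha hl]
      rcases le_total k l with h | h
      · calc ((min (M + 2^(K-k)) (M + 2^(K-l)) : ℕ):ℝ) + 1
            ≤ ((M + 2^(K-l) : ℕ):ℝ) + 1 := by
              have h0 : (min (M + 2^(K-k)) (M + 2^(K-l)) : ℕ) ≤ M + 2^(K-l) := min_le_right _ _
              have := (Nat.cast_le (α := ℝ)).mpr h0
              linarith
          _ = (M:ℝ) + 2^(K - max k l) + 1 := by
              rw [max_eq_right h]; push_cast; ring
      · calc ((min (M + 2^(K-k)) (M + 2^(K-l)) : ℕ):ℝ) + 1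
            ≤ ((M + 2^(K-k) : ℕ):ℝ) + 1 := by
              have h0 : (min (M + 2^(K-k)) (M + 2^(K-l)) : ℕ) ≤ M + 2^(K-k) := min_le_left _ _
              have := (Nat.cast_le (α := ℝ)).mpr h0
              linarith
          _ = (M:ℝ) + 2^(K - max k l) + 1 := by
              rw [max_eq_left h]; push_cast; ring
    have c2 : (((strings N).filter
        (fun α => α <+: (diagQ s a k).2 ∧ α <+: (diagQ s a l).2)).card : ℝ) ≤
        (M:ℝ) + 2^(min k l) + 1 := by
      refine le_trans (prefix_count_le N _ _) ?_
      rw [hlen2 a k ha, hlen2 a l ha]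
      rcases le_total k l with h | h
      · calc ((min (M + 2^k) (M + 2^l) : ℕ):ℝ) + 1
            ≤ ((M + 2^k : ℕ):ℝ) + 1 := by
              have h0 : (min (M + 2^k) (M + 2^l) : ℕ) ≤ M + 2^k := min_le_left _ _
              have := (Nat.cast_le (α := ℝ)).mpr h0; linarith
          _ = (M:ℝ) + 2^(min k l) + 1 := by rw [min_eq_left h]; push_cast; ring
      · calc ((min (M + 2^k) (M + 2^l) : ℕ):ℝ) + 1
            ≤ ((M + 2^l : ℕ):ℝ) + 1 := by
              have h0 : (min (M + 2^k) (M + 2^l) : ℕ) ≤ M + 2^l := min_le_right _ _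
              have := (Nat.cast_le (α := ℝ)).mpr h0; linarith
          _ = (M:ℝ) + 2^(min k l) + 1 := by rw [min_eq_right h]; push_cast; ring
    have hprod : (((strings N).filter
        (fun α => α <+: (diagQ s a k).1 ∧ α <+: (diagQ s a l).1)).card : ℝ) *
        (((strings N).filter
        (fun α => α <+: (diagQ s a k).2 ∧ α <+: (diagQ s a l).2)).card : ℝ) ≤
        ((M:ℝ) + 2^(K - max k l) + 1) * ((M:ℝ) + 2^(min k l) + 1) := by
      apply mul_le_mul c1 c2 (by positivity) (by positivity)
    have hdd : (0:ℝ) ≤ (((range (M+1)).filter (fun i => a.take i = a.take i)).card : ℝ)^2 := by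
      positivity
    linarith
  · rw [if_neg hab]
    have c1 : (((strings N).filter
        (fun α => α <+: (diagQ s a k).1 ∧ α <+: (diagQ s b l).1)).card : ℝ) ≤
        (((range (M+1)).filter (fun i => a.take i = b.take i)).card : ℝ) := by
      simp only [diagQ]
      exact prefix_count_ne ha hb hab
    have c2 : (((strings N).filter
        (fun α => α <+: (diagQ s a k).2 ∧ α <+: (diagQ s b l).2)).card : ℝ) ≤
        (((range (M+1)).filter (fun i => a.take i = b.take i)).card : ℝ) := by
      simp only [diagQ]
      exact prefix_count_ne ha hb hab
    have := mul_le_mul c1 c2 (by positivity) (by positivity)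
    calc _ ≤ (((range (M+1)).filter (fun i => a.take i = b.take i)).card : ℝ) *
          (((range (M+1)).filter (fun i => a.take i = b.take i)).card : ℝ) := this
      _ = 0 + (((range (M+1)).filter (fun i => a.take i = b.take i)).card : ℝ)^2 := by ring

lemma sum_D_le (s : ℕ) (hs : 4 ≤ s) :
    ∑ k ∈ range (2^s+1), ∑ l ∈ range (2^s+1),
        ((((2^s - s : ℕ)) : ℝ) + 2^(2^s - max k l) + 1) * ((((2^s - s : ℕ)) : ℝ) + 2^(min k l) + 1)
      ≤ 33 * 2^(2^s + s) := by
  set M := 2^s - s with hM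
  set K := 2^s with hK
  have hsK : s ≤ K := Nat.le_of_lt (Nat.lt_two_pow_self)
  have h3s : 3*s + 4 ≤ K := three_s_le s hs
  have expand : ∀ k l : ℕ,
      (((M:ℕ) : ℝ) + 2^(K - max k l) + 1) * (((M:ℕ):ℝ) + 2^(min k l) + 1)
      = ((M:ℝ)+1)^2 + ((M:ℝ)+1) * 2^(min k l) + ((M:ℝ)+1) * 2^(K - max k l)
        + 2^(K - max k l) * 2^(min k l) := by
    intro k l; ring
  have hsum : ∑ k ∈ range (K+1), ∑ l ∈ range (K+1),
      (((M:ℕ):ℝ) + 2^(K - max k l) + 1) * (((M:ℕ):ℝ) + 2^(min k l) + 1)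
      = ((K:ℝ)+1)^2 * ((M:ℝ)+1)^2
        + ((M:ℝ)+1) * (∑ k ∈ range (K+1), ∑ l ∈ range (K+1), (2:ℝ)^(min k l))
        + ((M:ℝ)+1) * (∑ k ∈ range (K+1), ∑ l ∈ range (K+1), (2:ℝ)^(K - max k l))
        + (∑ k ∈ range (K+1), ∑ l ∈ range (K+1), (2:ℝ)^(K - max k l) * 2^(min k l)) := by
    simp only [expand, Finset.sum_add_distrib, Finset.mul_sum, Finset.sum_const,
      Finset.card_range, nsmul_eq_mul]
    push_cast
    ring
  rw [hsum]
  -- numeric bounds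
  have e1 : ((K:ℝ)+1)^2 * ((M:ℝ)+1)^2 ≤ 2^(K+s) := by
    have h1 : (K+1)^2 * (M+1)^2 ≤ 2^(K+s) := by
      have hK1 : K + 1 ≤ 2^(s+1) := by
        rw [pow_succ]; have : 1 ≤ 2^s := Nat.one_le_two_pow; omega
      have hM1 : M + 1 ≤ 2^(s+1) := by
        have : M ≤ K := Nat.sub_le _ _
        rw [pow_succ]; have : 1 ≤ 2^s := Nat.one_le_two_pow; omega
      calc (K+1)^2 * (M+1)^2 ≤ (2^(s+1))^2 * (2^(s+1))^2 := by
            apply Nat.mul_le_mul <;> exact Nat.pow_le_pow_left (by assumption) 2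
        _ = 2^(4*s+4) := by rw [← pow_mul, ← pow_add]; congr 1; ring
        _ ≤ 2^(K+s) := Nat.pow_le_pow_right (by norm_num) (by omega)
    calc ((K:ℝ)+1)^2 * ((M:ℝ)+1)^2 = (((K+1)^2 * (M+1)^2 : ℕ) : ℝ) := by push_cast; ring
      _ ≤ ((2^(K+s) : ℕ) : ℝ) := by exact_mod_cast h1
      _ = 2^(K+s) := by push_cast; ring
  have hMle : ((M:ℝ)+1) ≤ 2^s := by
    have : M + 1 ≤ 2^s := by omega
    calc ((M:ℝ)+1) = ((M+1 : ℕ) : ℝ) := by push_cast; ring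
      _ ≤ ((2^s : ℕ) : ℝ) := by exact_mod_cast this
      _ = 2^s := by push_cast; ring
  have hMnn : (0:ℝ) ≤ (M:ℝ)+1 := by positivity
  have e2 : ((M:ℝ)+1) * (∑ k ∈ range (K+1), ∑ l ∈ range (K+1), (2:ℝ)^(min k l))
      ≤ 12 * 2^(K+s) := by
    have hnn : (0:ℝ) ≤ ∑ k ∈ range (K+1), ∑ l ∈ range (K+1), (2:ℝ)^(min k l) := by
      apply Finset.sum_nonneg; intro k _; apply Finset.sum_nonneg; intro l _; positivity
    calc ((M:ℝ)+1) * (∑ k ∈ range (K+1), ∑ l ∈ range (K+1), (2:ℝ)^(min k l))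
        ≤ (2:ℝ)^s * (12 * 2^K) := by
          apply mul_le_mul hMle (sum_min_le K) hnn (by positivity)
      _ = 12 * 2^(K+s) := by rw [pow_add]; ring
  have e3 : ((M:ℝ)+1) * (∑ k ∈ range (K+1), ∑ l ∈ range (K+1), (2:ℝ)^(K - max k l))
      ≤ 12 * 2^(K+s) := by
    have hnn : (0:ℝ) ≤ ∑ k ∈ range (K+1), ∑ l ∈ range (K+1), (2:ℝ)^(K - max k l) := by
      apply Finset.sum_nonneg; intro k _; apply Finset.sum_nonneg; intro l _; positivity
    calc ((M:ℝ)+1) * (∑ k ∈ range (K+1), ∑ l ∈ range (K+1), (2:ℝ)^(K - max k l))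
        ≤ (2:ℝ)^s * (12 * 2^K) := by
          apply mul_le_mul hMle (sum_maxK_le K) hnn (by positivity)
      _ = 12 * 2^(K+s) := by rw [pow_add]; ring
  have e4 : (∑ k ∈ range (K+1), ∑ l ∈ range (K+1), (2:ℝ)^(K - max k l) * 2^(min k l))
      ≤ 8 * 2^(K+s) := by
    calc (∑ k ∈ range (K+1), ∑ l ∈ range (K+1), (2:ℝ)^(K - max k l) * 2^(min k l))
        ≤ 4 * (K+1) * 2^K := sum_cross_le K
      _ ≤ 4 * (2 * 2^s) * 2^K := by
          have : ((K:ℝ)+1) ≤ 2 * 2^s := by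
            have h1 : (K:ℝ) = 2^s := by rw [hK]; push_cast; ring
            rw [h1]
            have : (1:ℝ) ≤ 2^s := one_le_pow₀ (by norm_num)
            linarith
          have h2 : (0:ℝ) ≤ 2^K := by positivity
          nlinarith
      _ = 8 * 2^(K+s) := by rw [pow_add]; ring
  linarith
lemma main_lower (s : ℕ) (hs : 4 ≤ s) (f : List Bool × List Bool → ℝ)
    (hf0 : ∀ p, 0 ≤ f p)
    (hf1 : ∀ p ∈ diagF s, 1 ≤ biI (2 ^ 2 ^ s + (2 ^ s - s)) f p) :
    (1:ℝ)/64 ≤ ∑ p ∈ biVertices (2 ^ 2 ^ s + (2 ^ s - s)), f p ^ 2 := by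
  classical
  set N := 2 ^ 2 ^ s + (2 ^ s - s) with hN
  set M := 2 ^ s - s with hM
  set K := 2 ^ s with hK
  have hsK : s ≤ K := Nat.le_of_lt (Nat.lt_two_pow_self)
  set I := (lenS M) ×ˢ (range (K+1)) with hI
  set Q : List Bool × ℕ → List Bool × List Bool := fun x => diagQ s x.1 x.2 with hQdef
  set Fs := I.image Q with hFs
  set μ : List Bool × List Bool → ℝ := fun p => if p ∈ Fs then 1 else 0 with hμ
  -- lengths
  have hdiv : ∀ m, m ≤ K → 2^K / 2^m = 2^(K - m) := fun m hm => Nat.pow_div hm two_pos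
  have hlen1 : ∀ (c : List Bool) (m : ℕ), m ≤ K →
      (diagQ s c m).1.length = c.length + 2^(K - m) := by
    intro c m hm
    simp only [diagQ, List.length_append, List.length_replicate]
    rw [← hK, hdiv m hm]
  have hlen2 : ∀ (c : List Bool) (m : ℕ), (diagQ s c m).2.length = c.length + 2^m := by
    intro c m
    simp only [diagQ, List.length_append, List.length_replicate]
  -- F ⊆ V
  have hFssubV : Fs ⊆ biVertices N := by
    intro p hp
    obtain ⟨x, hxI, rfl⟩ := Finset.mem_image.mp hp
    obtain ⟨hx1, hx2⟩ := Finset.mem_product.mp hxI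
    have ha : x.1.length = M := mem_lenS.mp hx1
    have hk : x.2 ≤ K := Nat.lt_succ_iff.mp (mem_range.mp hx2)
    have l1 : (Q x).1.length ≤ N := by
      rw [hQdef]; rw [hlen1 x.1 x.2 hk, ha, hN]
      have : 2^(K - x.2) ≤ 2^K := Nat.pow_le_pow_right (by norm_num) (Nat.sub_le _ _)
      omega
    have l2 : (Q x).2.length ≤ N := by
      rw [hQdef]; rw [hlen2 x.1 x.2, ha, hN]
      have : 2^(x.2) ≤ 2^K := Nat.pow_le_pow_right (by norm_num) hk
      omega
    exact Finset.mem_product.mpr ⟨mem_strings.mpr l1, mem_strings.mpr l2⟩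
  -- injectivity
  have hQinj : Set.InjOn Q ↑I := by
    intro x hx y hy hxy
    have hx' : x ∈ I := hx
    have hy' : y ∈ I := hy
    obtain ⟨hx1, hx2⟩ := Finset.mem_product.mp hx'
    obtain ⟨hy1, hy2⟩ := Finset.mem_product.mp hy'
    have ha : x.1.length = M := mem_lenS.mp hx1
    have hb : y.1.length = M := mem_lenS.mp hy1
    have h2 : x.1 ++ List.replicate (2 ^ x.2) false = y.1 ++ List.replicate (2 ^ y.2) false :=
      congrArg Prod.snd hxy
    have hlen : M + 2^x.2 = M + 2^y.2 := by
      have := congrArg List.length h2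
      simpa [List.length_append, List.length_replicate, ha, hb] using this
    have hkl : x.2 = y.2 := by
      have : (2:ℕ)^x.2 = 2^y.2 := by omega
      exact Nat.pow_right_injective (by norm_num) this
    have hab : x.1 = y.1 := by
      have := List.append_inj_left h2 (by rw [ha, hb])
      exact this
    exact Prod.ext hab hkl
  -- mass
  have hmass : ∑ p ∈ biVertices N, μ p = ((2^M * (K+1) : ℕ) : ℝ) := by
    rw [hμ]
    simp only []
    rw [Finset.sum_boole]
    congr 1
    have : (biVertices N).filter (fun p => p ∈ Fs) = Fs := by
      ext p
      simp only [Finset.mem_filter]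
      exact ⟨fun h => h.2, fun h => ⟨hFssubV h, h⟩⟩
    rw [this, hFs, Finset.card_image_of_injOn hQinj, hI, Finset.card_product,
      card_lenS, Finset.card_range]
  -- biIstar identity
  have hIstar : ∀ q : List Bool × List Bool, biIstar N μ q
      = ∑ x ∈ I, (if q.1 <+: (Q x).1 ∧ q.2 <+: (Q x).2 then (1:ℝ) else 0) := by
    intro q
    unfold biIstar
    rw [hμ]
    simp only []
    rw [Finset.sum_boole]
    have e1 : ((biVertices N).filter (fun p => q.1 <+: p.1 ∧ q.2 <+: p.2)).filter
        (fun p => p ∈ Fs) = Fs.filter (fun p => q.1 <+: p.1 ∧ q.2 <+: p.2) := by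
      ext p
      simp only [Finset.mem_filter]
      constructor
      · rintro ⟨⟨-, h⟩, hF⟩; exact ⟨hF, h⟩
      · rintro ⟨hF, h⟩; exact ⟨⟨hFssubV hF, h⟩, hF⟩
    rw [e1, hFs, Finset.filter_image,
      Finset.card_image_of_injOn (hQinj.mono (Finset.coe_subset.mpr (Finset.filter_subset _ _))),
      Finset.sum_boole]
  -- first inequality: mass ≤ ∑ μ * biI
  have hbiInn : ∀ p, 0 ≤ biI N f p := by
    intro p; unfold biI; exact Finset.sum_nonneg (fun q _ => hf0 q)
  have h1 : ((2^M * (K+1) : ℕ) : ℝ) ≤ ∑ p ∈ biVertices N, μ p * biI N f p := by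
    rw [← hmass]
    apply Finset.sum_le_sum
    intro p hp
    by_cases hpF : p ∈ Fs
    · have hμ1 : μ p = 1 := by rw [hμ]; simp [hpF]
      have hdF : p ∈ diagF s := by
        obtain ⟨x, hxI, rfl⟩ := Finset.mem_image.mp hpF
        obtain ⟨hx1, hx2⟩ := Finset.mem_product.mp hxI
        exact ⟨x.1, x.2, mem_lenS.mp hx1, Nat.lt_succ_iff.mp (mem_range.mp hx2), rfl⟩
      have := hf1 p hdF
      rw [hμ1, one_mul]
      exact this
    · have hμ0 : μ p = 0 := by rw [hμ]; simp [hpF]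
      rw [hμ0, zero_mul]
  -- Fubini
  have hfub : ∑ p ∈ biVertices N, μ p * biI N f p
      = ∑ q ∈ biVertices N, biIstar N μ q * f q := by
    calc ∑ p ∈ biVertices N, μ p * biI N f p
        = ∑ p ∈ biVertices N, ∑ q ∈ (biVertices N).filter
            (fun q => q.1 <+: p.1 ∧ q.2 <+: p.2), μ p * f q := by
          apply Finset.sum_congr rfl; intro p _
          unfold biI; rw [Finset.mul_sum]
      _ = ∑ p ∈ biVertices N, ∑ q ∈ biVertices N,
            (if q.1 <+: p.1 ∧ q.2 <+: p.2 then μ p * f q else 0) := by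
          apply Finset.sum_congr rfl; intro p _
          rw [Finset.sum_filter]
      _ = ∑ q ∈ biVertices N, ∑ p ∈ biVertices N,
            (if q.1 <+: p.1 ∧ q.2 <+: p.2 then μ p * f q else 0) := Finset.sum_comm
      _ = ∑ q ∈ biVertices N, ∑ p ∈ (biVertices N).filter
            (fun p => q.1 <+: p.1 ∧ q.2 <+: p.2), μ p * f q := by
          apply Finset.sum_congr rfl; intro q _
          rw [Finset.sum_filter]
      _ = ∑ q ∈ biVertices N, biIstar N μ q * f q := by
          apply Finset.sum_congr rfl; intro q _
          unfold biIstar; rw [Finset.sum_mul]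
  -- Cauchy–Schwarz
  have hCS : (∑ q ∈ biVertices N, biIstar N μ q * f q)^2
      ≤ (∑ q ∈ biVertices N, (biIstar N μ q)^2) * (∑ q ∈ biVertices N, f q ^ 2) :=
    Finset.sum_mul_sq_le_sq_mul_sq _ _ _
  -- energy identity
  have hsq : ∀ q : List Bool × List Bool, (biIstar N μ q)^2
      = ∑ x ∈ I, ∑ y ∈ I, (if (q.1 <+: (Q x).1 ∧ q.2 <+: (Q x).2) ∧
          (q.1 <+: (Q y).1 ∧ q.2 <+: (Q y).2) then (1:ℝ) else 0) := by
    intro q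
    rw [hIstar q, sq, Finset.sum_mul_sum]
    apply Finset.sum_congr rfl; intro x _
    apply Finset.sum_congr rfl; intro y _
    by_cases h1 : q.1 <+: (Q x).1 ∧ q.2 <+: (Q x).2 <;>
      by_cases h2 : q.1 <+: (Q y).1 ∧ q.2 <+: (Q y).2 <;> simp [h1, h2]
  have hcnt : ∀ x y : List Bool × ℕ,
      ∑ q ∈ biVertices N, (if (q.1 <+: (Q x).1 ∧ q.2 <+: (Q x).2) ∧
          (q.1 <+: (Q y).1 ∧ q.2 <+: (Q y).2) then (1:ℝ) else 0)
      = (((strings N).filter (fun α => α <+: (Q x).1 ∧ α <+: (Q y).1)).card : ℝ) *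
        (((strings N).filter (fun α => α <+: (Q x).2 ∧ α <+: (Q y).2)).card : ℝ) := by
    intro x y
    rw [Finset.sum_boole]
    have e : (biVertices N).filter (fun q => (q.1 <+: (Q x).1 ∧ q.2 <+: (Q x).2) ∧
        (q.1 <+: (Q y).1 ∧ q.2 <+: (Q y).2))
        = ((strings N).filter (fun α => α <+: (Q x).1 ∧ α <+: (Q y).1)) ×ˢ
          ((strings N).filter (fun α => α <+: (Q x).2 ∧ α <+: (Q y).2)) := by
      rw [← Finset.filter_product]
      apply Finset.filter_congr
      intro q _
      tauto
    rw [e, Finset.card_product]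
    push_cast
    ring
  have henergy_eq : ∑ q ∈ biVertices N, (biIstar N μ q)^2
      = ∑ x ∈ I, ∑ y ∈ I,
          ((((strings N).filter (fun α => α <+: (Q x).1 ∧ α <+: (Q y).1)).card : ℝ) *
          (((strings N).filter (fun α => α <+: (Q x).2 ∧ α <+: (Q y).2)).card : ℝ)) := by
    calc ∑ q ∈ biVertices N, (biIstar N μ q)^2
        = ∑ q ∈ biVertices N, ∑ x ∈ I, ∑ y ∈ I,
            (if (q.1 <+: (Q x).1 ∧ q.2 <+: (Q x).2) ∧
              (q.1 <+: (Q y).1 ∧ q.2 <+: (Q y).2) then (1:ℝ) else 0) := by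
          apply Finset.sum_congr rfl; intro q _; exact hsq q
      _ = ∑ x ∈ I, ∑ q ∈ biVertices N, ∑ y ∈ I,
            (if (q.1 <+: (Q x).1 ∧ q.2 <+: (Q x).2) ∧
              (q.1 <+: (Q y).1 ∧ q.2 <+: (Q y).2) then (1:ℝ) else 0) := Finset.sum_comm
      _ = ∑ x ∈ I, ∑ y ∈ I, ∑ q ∈ biVertices N,
            (if (q.1 <+: (Q x).1 ∧ q.2 <+: (Q x).2) ∧
              (q.1 <+: (Q y).1 ∧ q.2 <+: (Q y).2) then (1:ℝ) else 0) := by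
          apply Finset.sum_congr rfl; intro x _; exact Finset.sum_comm
      _ = _ := by
          apply Finset.sum_congr rfl; intro x _
          apply Finset.sum_congr rfl; intro y _
          exact hcnt x y
  -- energy bound
  have hEbound : ∑ q ∈ biVertices N, (biIstar N μ q)^2
      ≤ 39 * ((2^M * (K+1) : ℕ) : ℝ)^2 := by
    rw [henergy_eq, hI]
    simp only [Finset.sum_product, hQdef]
    have step1 : ∑ a ∈ lenS M, ∑ k ∈ range (K+1), ∑ b ∈ lenS M, ∑ l ∈ range (K+1),
        ((((strings N).filter (fun α => α <+: (diagQ s a k).1 ∧ α <+: (diagQ s b l).1)).card : ℝ) *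
        (((strings N).filter (fun α => α <+: (diagQ s a k).2 ∧ α <+: (diagQ s b l).2)).card : ℝ))
        ≤ ∑ a ∈ lenS M, ∑ k ∈ range (K+1), ∑ b ∈ lenS M, ∑ l ∈ range (K+1),
          ((if a = b then (((M : ℕ) : ℝ) + 2^(K - max k l) + 1) *
              (((M : ℕ) : ℝ) + 2^(min k l) + 1) else 0) +
          (((range (M+1)).filter (fun i => a.take i = b.take i)).card : ℝ)^2) := by
      apply Finset.sum_le_sum; intro a ha
      apply Finset.sum_le_sum; intro k hk
      apply Finset.sum_le_sum; intro b hb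
      apply Finset.sum_le_sum; intro l hl
      exact pair_bound a b (mem_lenS.mp ha) (mem_lenS.mp hb)
        (Nat.lt_succ_iff.mp (mem_range.mp hk)) (Nat.lt_succ_iff.mp (mem_range.mp hl))
    refine le_trans step1 ?_
    have split : ∑ a ∈ lenS M, ∑ k ∈ range (K+1), ∑ b ∈ lenS M, ∑ l ∈ range (K+1),
        ((if a = b then (((M : ℕ) : ℝ) + 2^(K - max k l) + 1) *
            (((M : ℕ) : ℝ) + 2^(min k l) + 1) else 0) +
        (((range (M+1)).filter (fun i => a.take i = b.take i)).card : ℝ)^2)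
        = (∑ a ∈ lenS M, ∑ k ∈ range (K+1), ∑ b ∈ lenS M, ∑ l ∈ range (K+1),
            (if a = b then (((M : ℕ) : ℝ) + 2^(K - max k l) + 1) *
              (((M : ℕ) : ℝ) + 2^(min k l) + 1) else 0))
          + (∑ a ∈ lenS M, ∑ k ∈ range (K+1), ∑ b ∈ lenS M, ∑ l ∈ range (K+1),
            (((range (M+1)).filter (fun i => a.take i = b.take i)).card : ℝ)^2) := by
      simp only [Finset.sum_add_distrib]
    rw [split]
    -- diagonal part
    have hdiag : ∑ a ∈ lenS M, ∑ k ∈ range (K+1), ∑ b ∈ lenS M, ∑ l ∈ range (K+1),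
        (if a = b then (((M : ℕ) : ℝ) + 2^(K - max k l) + 1) *
          (((M : ℕ) : ℝ) + 2^(min k l) + 1) else 0)
        = (2^M : ℝ) * ∑ k ∈ range (K+1), ∑ l ∈ range (K+1),
            ((((M : ℕ)) : ℝ) + 2^(K - max k l) + 1) * ((((M : ℕ)) : ℝ) + 2^(min k l) + 1) := by
      have hper : ∀ a ∈ lenS M, ∑ k ∈ range (K+1), ∑ b ∈ lenS M, ∑ l ∈ range (K+1),
          (if a = b then (((M : ℕ) : ℝ) + 2^(K - max k l) + 1) *
            (((M : ℕ) : ℝ) + 2^(min k l) + 1) else 0)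
          = ∑ k ∈ range (K+1), ∑ l ∈ range (K+1),
            ((((M : ℕ)) : ℝ) + 2^(K - max k l) + 1) * ((((M : ℕ)) : ℝ) + 2^(min k l) + 1) := by
        intro a ha
        apply Finset.sum_congr rfl; intro k _
        have e1 : ∀ b ∈ lenS M, ∑ l ∈ range (K+1),
            (if a = b then (((M : ℕ) : ℝ) + 2^(K - max k l) + 1) *
              (((M : ℕ) : ℝ) + 2^(min k l) + 1) else 0)
            = (if a = b then ∑ l ∈ range (K+1), (((M : ℕ) : ℝ) + 2^(K - max k l) + 1) *
              (((M : ℕ) : ℝ) + 2^(min k l) + 1) else 0) := by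
          intro b _
          split_ifs <;> simp
        rw [Finset.sum_congr rfl e1, Finset.sum_ite_eq, if_pos ha]
      rw [Finset.sum_congr rfl hper, Finset.sum_const, card_lenS, nsmul_eq_mul]
      push_cast
      ring
    -- off-diagonal part
    have hoff : ∑ a ∈ lenS M, ∑ k ∈ range (K+1), ∑ b ∈ lenS M, ∑ l ∈ range (K+1),
        (((range (M+1)).filter (fun i => a.take i = b.take i)).card : ℝ)^2
        = ((K:ℝ)+1)^2 * ∑ a ∈ lenS M, ∑ b ∈ lenS M,
            (((range (M+1)).filter (fun i => a.take i = b.take i)).card : ℝ)^2 := by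
      have hper : ∀ a ∈ lenS M, ∑ k ∈ range (K+1), ∑ b ∈ lenS M, ∑ l ∈ range (K+1),
          (((range (M+1)).filter (fun i => a.take i = b.take i)).card : ℝ)^2
          = ((K:ℝ)+1)^2 * ∑ b ∈ lenS M,
            (((range (M+1)).filter (fun i => a.take i = b.take i)).card : ℝ)^2 := by
        intro a _
        have inner : ∀ b ∈ lenS M, ∑ l ∈ range (K+1),
            (((range (M+1)).filter (fun i => a.take i = b.take i)).card : ℝ)^2
            = ((K:ℝ)+1) * (((range (M+1)).filter (fun i => a.take i = b.take i)).card : ℝ)^2 := by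
          intro b _
          rw [Finset.sum_const, Finset.card_range, nsmul_eq_mul]
          push_cast; ring
        calc ∑ k ∈ range (K+1), ∑ b ∈ lenS M, ∑ l ∈ range (K+1),
              (((range (M+1)).filter (fun i => a.take i = b.take i)).card : ℝ)^2
            = ∑ k ∈ range (K+1), ∑ b ∈ lenS M, ((K:ℝ)+1) *
              (((range (M+1)).filter (fun i => a.take i = b.take i)).card : ℝ)^2 := by
              apply Finset.sum_congr rfl; intro k _
              exact Finset.sum_congr rfl inner
          _ = ∑ k ∈ range (K+1), ((K:ℝ)+1) * ∑ b ∈ lenS M,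
              (((range (M+1)).filter (fun i => a.take i = b.take i)).card : ℝ)^2 := by
              apply Finset.sum_congr rfl; intro k _
              rw [Finset.mul_sum]
          _ = ((K:ℝ)+1)^2 * ∑ b ∈ lenS M,
              (((range (M+1)).filter (fun i => a.take i = b.take i)).card : ℝ)^2 := by
              rw [Finset.sum_const, Finset.card_range, nsmul_eq_mul]
              push_cast; ring
      rw [Finset.sum_congr rfl hper, ← Finset.mul_sum]
    rw [hdiag, hoff]
    -- numeric bounds
    have hd2 : (2^M : ℝ) * ∑ k ∈ range (K+1), ∑ l ∈ range (K+1),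
        ((((M : ℕ)) : ℝ) + 2^(K - max k l) + 1) * ((((M : ℕ)) : ℝ) + 2^(min k l) + 1)
        ≤ (2^M : ℝ) * (33 * 2^(K + s)) := by
      apply mul_le_mul_of_nonneg_left _ (by positivity)
      have := sum_D_le s hs
      rw [← hK, ← hM] at this
      exact this
    have hoff2 : ((K:ℝ)+1)^2 * ∑ a ∈ lenS M, ∑ b ∈ lenS M,
        (((range (M+1)).filter (fun i => a.take i = b.take i)).card : ℝ)^2
        ≤ ((K:ℝ)+1)^2 * (6 * 2^(2*M)) := by
      apply mul_le_mul_of_nonneg_left (sum_dd_sq M) (by positivity)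
    have hKM : K + s = M + 2*s := by omega
    have hcast : ((2^M * (K+1) : ℕ) : ℝ)^2 = (2^M:ℝ)^2 * ((K:ℝ)+1)^2 := by
      push_cast; ring
    have hfin1 : (2^M : ℝ) * (33 * 2^(K + s)) ≤ 33 * ((2^M:ℝ)^2 * ((K:ℝ)+1)^2) := by
      have e : (2:ℝ)^(K+s) = 2^M * ((2:ℝ)^s)^2 := by
        rw [← pow_mul, ← pow_add]
        congr 1
        omega
      rw [e]
      have hle : ((2:ℝ)^s)^2 ≤ ((K:ℝ)+1)^2 := by
        have h1 : (2:ℝ)^s ≤ (K:ℝ)+1 := by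
          have : ((2^s : ℕ):ℝ) ≤ ((K+1 : ℕ):ℝ) := by
            exact_mod_cast Nat.le_succ K
          push_cast at this
          linarith
        have h2 : (0:ℝ) ≤ (2:ℝ)^s := by positivity
        nlinarith
      nlinarith [pow_pos (by norm_num : (0:ℝ) < 2) M, sq_nonneg ((2:ℝ)^M)]
    have hfin2 : ((K:ℝ)+1)^2 * (6 * 2^(2*M)) ≤ 6 * ((2^M:ℝ)^2 * ((K:ℝ)+1)^2) := by
      have e : (2:ℝ)^(2*M) = ((2:ℝ)^M)^2 := by rw [← pow_mul, mul_comm]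
      rw [e]
      ring_nf
      linarith [sq_nonneg (((K:ℝ)+1) * (2:ℝ)^M)]
    rw [hcast]
    linarith
  -- conclusion
  have hZ : ((2^M * (K+1) : ℕ) : ℝ) ≤ ∑ q ∈ biVertices N, biIstar N μ q * f q := by
    rw [← hfub]; exact h1
  have hTnn : 0 ≤ ∑ p ∈ biVertices N, f p ^ 2 :=
    Finset.sum_nonneg (fun p _ => sq_nonneg _)
  have hmassnn : (0:ℝ) ≤ ((2^M * (K+1) : ℕ) : ℝ) := Nat.cast_nonneg _
  have hsq2 : ((2^M * (K+1) : ℕ) : ℝ)^2 ≤ (∑ q ∈ biVertices N, biIstar N μ q * f q)^2 :=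
    pow_le_pow_left₀ hmassnn hZ 2
  have hchain : ((2^M * (K+1) : ℕ) : ℝ)^2
      ≤ 39 * ((2^M * (K+1) : ℕ) : ℝ)^2 * (∑ p ∈ biVertices N, f p ^ 2) := by
    calc ((2^M * (K+1) : ℕ) : ℝ)^2
        ≤ (∑ q ∈ biVertices N, biIstar N μ q * f q)^2 := hsq2
      _ ≤ (∑ q ∈ biVertices N, (biIstar N μ q)^2) * (∑ q ∈ biVertices N, f q ^ 2) := hCS
      _ ≤ (39 * ((2^M * (K+1) : ℕ) : ℝ)^2) * (∑ p ∈ biVertices N, f p ^ 2) :=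
          mul_le_mul_of_nonneg_right hEbound hTnn
      _ = 39 * ((2^M * (K+1) : ℕ) : ℝ)^2 * (∑ p ∈ biVertices N, f p ^ 2) := by ring
  have hmp : (0:ℝ) < ((2^M * (K+1) : ℕ) : ℝ)^2 := by
    have : 0 < 2^M * (K+1) := by positivity
    have h1 : (0:ℝ) < ((2^M * (K+1) : ℕ) : ℝ) := by exact_mod_cast this
    positivity
  have h39 : 1 ≤ 39 * (∑ p ∈ biVertices N, f p ^ 2) := by
    have := hchain
    nlinarith
  linarith


/-- **In the diagonal construction, `cap F ≍ 1`** (on the bi-tree of depth `N = n + M`). -/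
theorem stmt17 : ∃ c₀ : ℝ, 0 < c₀ ∧ ∃ s₀ : ℕ, ∀ s : ℕ, s₀ ≤ s →
    c₀ ≤ biCap (2 ^ 2 ^ s + (2 ^ s - s)) (diagF s) ∧
    biCap (2 ^ 2 ^ s + (2 ^ s - s)) (diagF s) ≤ 1 := by
  classical
  refine ⟨1/64, by norm_num, 4, fun s hs => ?_⟩
  set N := 2 ^ 2 ^ s + (2 ^ s - s) with hN
  set f₀ : List Bool × List Bool → ℝ :=
    fun p => if p = (([]:List Bool), ([]:List Bool)) then (1:ℝ) else 0 with hf₀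
  have hrootV : (([]:List Bool), ([]:List Bool)) ∈ biVertices N :=
    Finset.mem_product.mpr ⟨mem_strings.mpr (Nat.zero_le _), mem_strings.mpr (Nat.zero_le _)⟩
  have hwit : (1:ℝ) ∈ { t : ℝ | ∃ f : List Bool × List Bool → ℝ, (∀ p, 0 ≤ f p) ∧
      (∀ p ∈ diagF s, 1 ≤ biI N f p) ∧ t = ∑ p ∈ biVertices N, (f p) ^ 2 } := by
    refine ⟨f₀, ?_, ?_, ?_⟩
    · intro p
      rw [hf₀]
      dsimp only
      split <;> norm_num
    · intro p _
      unfold biI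
      rw [hf₀]
      simp only []
      rw [Finset.sum_ite_eq']
      rw [if_pos]
      exact Finset.mem_filter.mpr ⟨hrootV, ⟨List.nil_prefix, List.nil_prefix⟩⟩
    · have e : ∀ p : List Bool × List Bool, (f₀ p)^2
          = if p = (([]:List Bool), ([]:List Bool)) then (1:ℝ) else 0 := by
        intro p
        rw [hf₀]
        dsimp only
        split <;> norm_num
      rw [Finset.sum_congr rfl (fun p _ => e p), Finset.sum_ite_eq', if_pos hrootV]
  constructor
  · apply le_csInf ⟨1, hwit⟩
    rintro t ⟨f, hf0, hf1, rfl⟩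
    exact main_lower s hs f hf0 hf1
  · apply csInf_le
    · refine ⟨0, ?_⟩
      rintro t ⟨f, hf0, -, rfl⟩
      positivity
    · exact hwit
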